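/- Let $a<b$ and $s<t$. Let $x_0,\dots,x_n$ be Lipschitz particle paths with speed at most $v_{\max}$, gaps at least $\ell/R_{\max}$, and suppose no particle crosses $a$ or $b$ during $[s,t]$ (i.e., the indices $I_a,I_b$ with $x_{I_a-1}\le a<x_{I_a}$ and $x_{I_b}<b\le x_{I_b+1}$ are constant on $[s,t]$), with $I_a\ge 1$ or $I_b\le n-1$. Then the empirical density $\rho^n(t,x)=\sum_i \frac{\ell}{x_{i+1}(t)-x_i(t)}\mathbf 1_{[x_i(t),x_{i+1}(t))}(x)$ satisfies $\big|\int_a^b (\rho^n(t,x)-\rho^n(s,x))\,dx\big| \le 6\, v_{\max} R_{\max}\,(t-s)$. -/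

import Mathlib

open MeasureTheory

lemma aux_ind_integrable (a b c d k : ℝ) :
    IntervalIntegrable (fun y => if c ≤ y ∧ y < d then k else 0) volume a b := by
  have h : (fun y => if c ≤ y ∧ y < d then k else 0)
      = (Set.Ico c d).indicator (fun _ => k) := by
    funext y; simp [Set.indicator, Set.mem_Ico]
  rw [h]
  constructor <;>
    exact (integrableOn_const measure_Ioc_lt_top.ne).indicator measurableSet_Ico

lemma aux_ind_integral (a b c d k : ℝ) (hab : a ≤ b) :
    ∫ y in a..b, (if c ≤ y ∧ y < d then k else 0)
      = max 0 (min b d - max a c) * k := by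
  have h : (fun y => if c ≤ y ∧ y < d then k else 0)
      = (Set.Ico c d).indicator (fun _ => k) := by
    funext y; simp [Set.indicator, Set.mem_Ico]
  rw [intervalIntegral.integral_of_le hab, h,
    setIntegral_indicator measurableSet_Ico, setIntegral_const]
  have hvol : volume (Set.Ioc a b ∩ Set.Ico c d)
      = ENNReal.ofReal (min b d - max a c) := by
    rcases le_or_gt (min b d) (max a c) with hle | hlt
    · have hsub : Set.Ioc a b ∩ Set.Ico c d ⊆ {max a c} := by
        intro y hy
        simp only [Set.mem_inter_iff, Set.mem_Ioc, Set.mem_Ico] at hy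
        have h1 : max a c ≤ y := max_le (le_of_lt hy.1.1) hy.2.1
        have h2 : y ≤ min b d := le_min hy.1.2 (le_of_lt hy.2.2)
        simp [le_antisymm (h2.trans hle) h1]
      have h0 : volume ({max a c} : Set ℝ) = 0 := measure_singleton _
      have := le_antisymm ((measure_mono hsub).trans h0.le) (by positivity)
      rw [this, ENNReal.ofReal_eq_zero.mpr (by linarith)]
    · have h1 : Set.Ioo (max a c) (min b d) ⊆ Set.Ioc a b ∩ Set.Ico c d := by
        intro y hy
        simp only [Set.mem_Ioo] at hy
        constructor
        · exact ⟨lt_of_le_of_lt (le_max_left a c) hy.1, le_of_lt (lt_of_lt_of_le hy.2 (min_le_left b d))⟩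
        · exact ⟨le_of_lt (lt_of_le_of_lt (le_max_right a c) hy.1), lt_of_lt_of_le hy.2 (min_le_right b d)⟩
      have h2 : Set.Ioc a b ∩ Set.Ico c d ⊆ Set.Icc (max a c) (min b d) := by
        intro y hy
        simp only [Set.mem_inter_iff, Set.mem_Ioc, Set.mem_Ico] at hy
        exact ⟨max_le (le_of_lt hy.1.1) hy.2.1, le_min hy.1.2 (le_of_lt hy.2.2)⟩
      refine le_antisymm ?_ ?_
      · calc volume (Set.Ioc a b ∩ Set.Ico c d) ≤ volume (Set.Icc (max a c) (min b d)) :=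
            measure_mono h2
          _ = ENNReal.ofReal (min b d - max a c) := Real.volume_Icc
      · calc ENNReal.ofReal (min b d - max a c) = volume (Set.Ioo (max a c) (min b d)) :=
            Real.volume_Ioo.symm
          _ ≤ volume (Set.Ioc a b ∩ Set.Ico c d) := measure_mono h1
  rw [measureReal_def, hvol, ENNReal.toReal_ofReal' ]
  rw [smul_eq_mul]
  rw [max_comm]

lemma aux_frac_bound (ℓ vmax Rmax Δ us ut ws wt : ℝ)
    (hℓ : 0 < ℓ) (hv : 0 ≤ vmax) (hR : 0 < Rmax) (hΔ : 0 ≤ Δ)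
    (hus : 0 ≤ us) (husw : us ≤ ws) (hut : 0 ≤ ut) (hutw : ut ≤ wt)
    (hws : ℓ / Rmax ≤ ws) (hwt : ℓ / Rmax ≤ wt)
    (hu : |ut - us| ≤ vmax * Δ) (hw : |wt - ws| ≤ 2 * vmax * Δ) :
    |ut * (ℓ / wt) - us * (ℓ / ws)| ≤ 3 * vmax * Rmax * Δ := by
  have hlR : 0 < ℓ / Rmax := div_pos hℓ hR
  have hws0 : 0 < ws := lt_of_lt_of_le hlR hws
  have hwt0 : 0 < wt := lt_of_lt_of_le hlR hwt
  have hkey : ut * (ℓ / wt) - us * (ℓ / ws)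
      = ℓ * ((ut * (ws - wt) + wt * (ut - us)) / (wt * ws)) := by
    field_simp
    ring
  rw [hkey, abs_mul, abs_of_pos hℓ, abs_div, abs_of_pos (mul_pos hwt0 hws0)]
  have hnum : |ut * (ws - wt) + wt * (ut - us)| ≤ 3 * wt * (vmax * Δ) := by
    calc |ut * (ws - wt) + wt * (ut - us)|
        ≤ |ut * (ws - wt)| + |wt * (ut - us)| := abs_add_le _ _
      _ = ut * |ws - wt| + wt * |ut - us| := by
          rw [abs_mul, abs_mul, abs_of_nonneg hut, abs_of_pos hwt0]
      _ ≤ wt * (2 * vmax * Δ) + wt * (vmax * Δ) := by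
          have h1 : |ws - wt| ≤ 2 * vmax * Δ := by rw [abs_sub_comm]; exact hw
          have := mul_le_mul hutw h1 (abs_nonneg _) hwt0.le
          nlinarith [mul_le_mul_of_nonneg_left hu hwt0.le]
      _ = 3 * wt * (vmax * Δ) := by ring
  calc ℓ * (|ut * (ws - wt) + wt * (ut - us)| / (wt * ws))
      ≤ ℓ * ((3 * wt * (vmax * Δ)) / (wt * ws)) := by
        apply mul_le_mul_of_nonneg_left _ hℓ.le
        exact div_le_div_of_nonneg_right hnum (mul_pos hwt0 hws0).le |>.trans_eq rfl
    _ = ℓ * (3 * (vmax * Δ) / ws) := by field_simp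
    _ ≤ ℓ * (3 * (vmax * Δ) * (Rmax / ℓ)) := by
        apply mul_le_mul_of_nonneg_left _ hℓ.le
        rw [div_eq_mul_one_div]
        apply mul_le_mul_of_nonneg_left _ (by positivity)
        rw [div_le_div_iff₀ hws0 hℓ]
        calc 1 * ℓ = ℓ / Rmax * Rmax := by field_simp
          _ ≤ ws * Rmax := by exact mul_le_mul_of_nonneg_right hws hR.le
          _ = Rmax * ws := mul_comm _ _
    _ = 3 * vmax * Rmax * Δ * (ℓ / ℓ) := by ring
    _ = 3 * vmax * Rmax * Δ := by rw [div_self hℓ.ne', mul_one]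

open intervalIntegral

/-- If no particle crosses `a` or `b` during `[s,t]`, the mass of the empirical
density in `[a,b]` varies at most like `6 vmax Rmax (t-s)`. -/
theorem stmt_7 (n : ℕ) (ℓ vmax Rmax a b s t : ℝ)
    (hℓ : 0 < ℓ) (hvmax : 0 ≤ vmax) (hRmax : 0 < Rmax)
    (hab : a < b) (hst : s < t)
    (x : ℕ → ℝ → ℝ)
    (hmono : ∀ τ : ℝ, ∀ i < n, x i τ < x (i+1) τ)
    (hLip : ∀ i ≤ n, ∀ τ₁ τ₂ : ℝ, |x i τ₁ - x i τ₂| ≤ vmax * |τ₁ - τ₂|)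
    (hgap : ∀ τ ∈ Set.Icc s t, ∀ i < n, ℓ / Rmax ≤ x (i+1) τ - x i τ)
    (Ia Ib : ℕ) (hIab : Ia ≤ Ib) (hIbn : Ib ≤ n)
    (hI : 1 ≤ Ia ∨ Ib + 1 ≤ n)
    (hno_cross : ∀ τ ∈ Set.Icc s t,
      (1 ≤ Ia → x (Ia - 1) τ ≤ a) ∧ a < x Ia τ ∧ x Ib τ < b ∧
      (Ib + 1 ≤ n → b ≤ x (Ib + 1) τ))
    (ρn : ℝ → ℝ → ℝ)
    (hρn : ∀ τ y, ρn τ y = ∑ i ∈ Finset.range n,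
      if x i τ ≤ y ∧ y < x (i+1) τ then ℓ / (x (i+1) τ - x i τ) else 0) :
    |∫ y in a..b, (ρn t y - ρn s y)| ≤ 6 * vmax * Rmax * (t - s) := by
  have hsle : s ≤ t := hst.le
  have hsmem : s ∈ Set.Icc s t := Set.left_mem_Icc.mpr hsle
  have htmem : t ∈ Set.Icc s t := Set.right_mem_Icc.mpr hsle
  have hts0 : 0 ≤ t - s := sub_nonneg.mpr hsle
  have hchain : ∀ (τ : ℝ) (i j : ℕ), i ≤ j → j ≤ n → x i τ ≤ x j τ := by
    intro τ i j hij hjn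
    induction j with
    | zero => rw [Nat.le_zero.mp hij]
    | succ m ih =>
      rcases Nat.eq_or_lt_of_le hij with h | h
      · rw [h]
      · exact (ih (Nat.lt_succ_iff.mp h) (by omega)).trans (hmono τ m (by omega)).le
  set C := 3 * vmax * Rmax * (t - s) with hC
  have hC0 : 0 ≤ C :=
    mul_nonneg (mul_nonneg (mul_nonneg (by norm_num) hvmax) hRmax.le) hts0
  have hIeq : ∫ y in a..b, (ρn t y - ρn s y)
      = ∑ i ∈ Finset.range n,
        (max 0 (min b (x (i+1) t) - max a (x i t)) * (ℓ / (x (i+1) t - x i t))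
          - max 0 (min b (x (i+1) s) - max a (x i s)) * (ℓ / (x (i+1) s - x i s))) := by
    simp only [hρn, ← Finset.sum_sub_distrib]
    rw [intervalIntegral.integral_finset_sum
      (fun i _ => ((aux_ind_integrable a b _ _ _).sub (aux_ind_integrable a b _ _ _)))]
    refine Finset.sum_congr rfl fun i _ => ?_
    rw [intervalIntegral.integral_sub (aux_ind_integrable a b _ _ _)
        (aux_ind_integrable a b _ _ _),
      aux_ind_integral a b _ _ _ hab.le, aux_ind_integral a b _ _ _ hab.le]
  have hbound : ∀ i ∈ Finset.range n,
      |max 0 (min b (x (i+1) t) - max a (x i t)) * (ℓ / (x (i+1) t - x i t))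
        - max 0 (min b (x (i+1) s) - max a (x i s)) * (ℓ / (x (i+1) s - x i s))|
      ≤ if (1 ≤ Ia ∧ i + 1 = Ia) ∨ (Ib + 1 ≤ n ∧ i = Ib) then C else 0 := by
    intro i hi
    rw [Finset.mem_range] at hi
    have hite : (0:ℝ) ≤ if (1 ≤ Ia ∧ i + 1 = Ia) ∨ (Ib + 1 ≤ n ∧ i = Ib) then C else 0 := by
      split <;> simp [hC0]
    by_cases h1 : i + 1 < Ia
    · -- fully to the left of a
      have hz : ∀ τ ∈ Set.Icc s t,
          max 0 (min b (x (i+1) τ) - max a (x i τ)) = 0 := by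
        intro τ hτ
        have hxa : x (i+1) τ ≤ a :=
          (hchain τ (i+1) (Ia-1) (by omega) (by omega)).trans ((hno_cross τ hτ).1 (by omega))
        have hm1 := min_le_right b (x (i+1) τ)
        have hm2 := le_max_left a (x i τ)
        exact max_eq_left (by linarith)
      rw [hz t htmem, hz s hsmem]
      simpa using hite
    · by_cases h2 : i + 1 = Ia
      · -- straddles a
        have h1a : 1 ≤ Ia := by omega
        have hval : ∀ τ ∈ Set.Icc s t,
            max 0 (min b (x (i+1) τ) - max a (x i τ)) * (ℓ / (x (i+1) τ - x i τ))
              = (x Ia τ - a) * (ℓ / (x Ia τ - x i τ)) := by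
          intro τ hτ
          obtain ⟨hcra, hcrb, hcrc, _⟩ := hno_cross τ hτ
          have hia : x i τ ≤ a := by
            have h := hcra h1a; rwa [show Ia - 1 = i by omega] at h
          have hib : x Ia τ < b := lt_of_le_of_lt (hchain τ Ia Ib hIab hIbn) hcrc
          rw [h2, min_eq_right hib.le, max_eq_left hia, max_eq_right (by linarith)]
        rw [hval t htmem, hval s hsmem, if_pos (Or.inl ⟨h1a, h2⟩)]
        have hlipIa := hLip Ia (le_trans hIab hIbn)
        have hlipi := hLip i (by omega)
        have habs : |t - s| = t - s := abs_of_nonneg hts0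
        refine aux_frac_bound ℓ vmax Rmax (t - s) (x Ia s - a) (x Ia t - a)
          (x Ia s - x i s) (x Ia t - x i t) hℓ hvmax hRmax hts0
          (by linarith [(hno_cross s hsmem).2.1])
          (by
            have h := (hno_cross s hsmem).1 h1a
            rw [show Ia - 1 = i by omega] at h
            linarith)
          (by linarith [(hno_cross t htmem).2.1])
          (by
            have h := (hno_cross t htmem).1 h1a
            rw [show Ia - 1 = i by omega] at h
            linarith)
          (by have h := hgap s hsmem i hi; rwa [h2] at h)
          (by have h := hgap t htmem i hi; rwa [h2] at h)
          ?_ ?_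
        · calc |(x Ia t - a) - (x Ia s - a)| = |x Ia t - x Ia s| := by ring_nf
            _ ≤ vmax * |t - s| := hlipIa t s
            _ = vmax * (t - s) := by rw [habs]
        · calc |(x Ia t - x i t) - (x Ia s - x i s)|
              = |(x Ia t - x Ia s) - (x i t - x i s)| := by ring_nf
            _ ≤ |x Ia t - x Ia s| + |x i t - x i s| := abs_sub _ _
            _ ≤ vmax * |t - s| + vmax * |t - s| := add_le_add (hlipIa t s) (hlipi t s)
            _ = 2 * vmax * (t - s) := by rw [habs]; ring
      · by_cases h3 : i + 1 ≤ Ib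
        · -- fully inside (a,b) : mass ℓ at both times
          have hval : ∀ τ ∈ Set.Icc s t,
              max 0 (min b (x (i+1) τ) - max a (x i τ)) * (ℓ / (x (i+1) τ - x i τ)) = ℓ := by
            intro τ hτ
            obtain ⟨_, hcrb, hcrc, _⟩ := hno_cross τ hτ
            have hai : a < x i τ := lt_of_lt_of_le hcrb (hchain τ Ia i (by omega) (by omega))
            have hib : x (i+1) τ < b := lt_of_le_of_lt (hchain τ (i+1) Ib h3 hIbn) hcrc
            have hgap' := hmono τ i hi
            rw [min_eq_right hib.le, max_eq_right hai.le, max_eq_right (by linarith),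
              mul_comm, div_mul_cancel₀ _ (by linarith : x (i+1) τ - x i τ ≠ 0)]
          rw [hval t htmem, hval s hsmem]
          simpa using hite
        · by_cases h4 : i = Ib
          · -- straddles b
            subst h4
            have hbn : i + 1 ≤ n := by omega
            have hval : ∀ τ ∈ Set.Icc s t,
                max 0 (min b (x (i+1) τ) - max a (x i τ)) * (ℓ / (x (i+1) τ - x i τ))
                  = (b - x i τ) * (ℓ / (x (i+1) τ - x i τ)) := by
              intro τ hτ
              obtain ⟨_, hcrb, hcrc, hcrd⟩ := hno_cross τ hτ
              have hai : a < x i τ := lt_of_lt_of_le hcrb (hchain τ Ia i hIab (by omega))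
              rw [min_eq_left (hcrd hbn), max_eq_right hai.le,
                max_eq_right (by linarith)]
            rw [hval t htmem, hval s hsmem, if_pos (Or.inr ⟨hbn, rfl⟩)]
            have hlipIb := hLip i (by omega)
            have hlipIb1 := hLip (i+1) (by omega)
            have habs : |t - s| = t - s := abs_of_nonneg hts0
            refine aux_frac_bound ℓ vmax Rmax (t - s) (b - x i s) (b - x i t)
              (x (i+1) s - x i s) (x (i+1) t - x i t) hℓ hvmax hRmax hts0
              (by linarith [(hno_cross s hsmem).2.2.1])
              (by linarith [(hno_cross s hsmem).2.2.2 hbn])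
              (by linarith [(hno_cross t htmem).2.2.1])
              (by linarith [(hno_cross t htmem).2.2.2 hbn])
              (hgap s hsmem i hi) (hgap t htmem i hi) ?_ ?_
            · calc |(b - x i t) - (b - x i s)| = |x i s - x i t| := by ring_nf
                _ ≤ vmax * |s - t| := hlipIb s t
                _ = vmax * (t - s) := by rw [abs_sub_comm, habs]
            · calc |(x (i+1) t - x i t) - (x (i+1) s - x i s)|
                  = |(x (i+1) t - x (i+1) s) - (x i t - x i s)| := by ring_nf
                _ ≤ |x (i+1) t - x (i+1) s| + |x i t - x i s| :=
                    abs_sub _ _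
                _ ≤ vmax * |t - s| + vmax * |t - s| :=
                    add_le_add (hlipIb1 t s) (hlipIb t s)
                _ = 2 * vmax * (t - s) := by rw [habs]; ring
          · -- fully to the right of b
            have hz : ∀ τ ∈ Set.Icc s t,
                max 0 (min b (x (i+1) τ) - max a (x i τ)) = 0 := by
              intro τ hτ
              have hbx : b ≤ x i τ :=
                le_trans ((hno_cross τ hτ).2.2.2 (by omega))
                  (hchain τ (Ib+1) i (by omega) hi.le)
              have hm1 := min_le_left b (x (i+1) τ)
              have hm2 := le_max_right a (x i τ)
              exact max_eq_left (by linarith)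
            rw [hz t htmem, hz s hsmem]
            simpa using hite
  rw [hIeq]
  calc |∑ i ∈ Finset.range n,
        (max 0 (min b (x (i+1) t) - max a (x i t)) * (ℓ / (x (i+1) t - x i t))
          - max 0 (min b (x (i+1) s) - max a (x i s)) * (ℓ / (x (i+1) s - x i s)))|
      ≤ ∑ i ∈ Finset.range n,
        |max 0 (min b (x (i+1) t) - max a (x i t)) * (ℓ / (x (i+1) t - x i t))
          - max 0 (min b (x (i+1) s) - max a (x i s)) * (ℓ / (x (i+1) s - x i s))| :=
        Finset.abs_sum_le_sum_abs _ _
    _ ≤ ∑ i ∈ Finset.range n,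
        (if (1 ≤ Ia ∧ i + 1 = Ia) ∨ (Ib + 1 ≤ n ∧ i = Ib) then C else 0) :=
        Finset.sum_le_sum hbound
    _ ≤ 6 * vmax * Rmax * (t - s) := by
        rw [← Finset.sum_filter, Finset.sum_const, nsmul_eq_mul]
        have hsub : (Finset.range n).filter
            (fun i => (1 ≤ Ia ∧ i + 1 = Ia) ∨ (Ib + 1 ≤ n ∧ i = Ib)) ⊆ {Ia - 1, Ib} := by
          intro i hmem
          rw [Finset.mem_filter] at hmem
          rcases hmem.2 with ⟨_, h⟩ | ⟨_, h⟩ <;>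
            simp only [Finset.mem_insert, Finset.mem_singleton] <;> omega
        have hcard : ((Finset.range n).filter
            (fun i => (1 ≤ Ia ∧ i + 1 = Ia) ∨ (Ib + 1 ≤ n ∧ i = Ib))).card ≤ 2 := by
          calc _ ≤ ({Ia - 1, Ib} : Finset ℕ).card := Finset.card_le_card hsub
            _ ≤ 2 := by
              classical
              exact (Finset.card_insert_le _ _).trans (by simp)
        calc (((Finset.range n).filter
            (fun i => (1 ≤ Ia ∧ i + 1 = Ia) ∨ (Ib + 1 ≤ n ∧ i = Ib))).card : ℝ) * C
            ≤ 2 * C := by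
              exact mul_le_mul_of_nonneg_right (by exact_mod_cast hcard) hC0
          _ = 6 * vmax * Rmax * (t - s) := by rw [hC]; ring
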